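/- Let σ : X → Y, σ′ : X′ → Y′, φ₁ : X → X′ and φ₂ : Y → Y′ be strong formal subdivisions between finite lower Eulerian posets (with rank functions ρ_X, ρ_Y, ρ_{X′}, ρ_{Y′}) such that σ′ ∘ φ₁ = φ₂ ∘ σ. Then the map φ : Cyl(σ) → Cyl(σ′), defined by φ(z) = φ₁(z) for z ∈ X and φ(z) = φ₂(z) for z ∈ Y, is a strong formal subdivision with respect to the rank functions ρ_{Cyl(σ)} and ρ_{Cyl(σ′)}. -/

import Mathlib

namespace SFSPaper

variable {α β : Type*}

/-- `ρ` is a rank function: it increases by exactly one along covering relations. -/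
def IsRankFunction [Preorder α] (ρ : α → ℤ) : Prop :=
  ∀ ⦃z z' : α⦄, z ⋖ z' → ρ z' = ρ z + 1

/-- `σ` is rank-increasing with respect to the rank functions `ρX` and `ρY`. -/
def RankIncreasing [Preorder α] [Preorder β] (ρX : α → ℤ) (ρY : β → ℤ) (σ : α → β) : Prop :=
  ∀ x : α, ρX x ≤ ρY (σ x)

/-- `σ` is strongly surjective. -/
def StronglySurjective [Preorder α] [Preorder β] (ρX : α → ℤ) (ρY : β → ℤ) (σ : α → β) : Prop :=
  Function.Surjective σ ∧
    ∀ (x : α) (y : β), σ x ≤ y → ∃ x' : α, x ≤ x' ∧ ρX x' = ρY y ∧ σ x' = y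

/-- The alternating sum `∑_{z ≤ w ≤ z'} (-1)^(ρ w)`. -/
noncomputable def intervalEulerSum [Preorder α] (ρ : α → ℤ) (z z' : α) : ℚ :=
  ∑ᶠ (w : α) (_ : z ≤ w ∧ w ≤ z'), (-1 : ℚ) ^ ρ w

/-- A poset is lower Eulerian with respect to `ρ` if `ρ` is a rank function, there is a
unique minimal (i.e. least) element, and every nontrivial interval has as many elements of even
rank as of odd rank. -/
def LowerEulerian [PartialOrder α] (ρ : α → ℤ) : Prop :=
  IsRankFunction ρ ∧ (∃ b : α, ∀ z : α, b ≤ z) ∧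
    ∀ z z' : α, z < z' → intervalEulerSum ρ z z' = 0

/-- Eulerian: lower Eulerian with a unique maximal element. -/
def Eulerian [PartialOrder α] (ρ : α → ℤ) : Prop :=
  LowerEulerian ρ ∧ ∃ t : α, ∀ z : α, z ≤ t

/-- Strong formal subdivision. -/
def StrongFormalSubdivision [PartialOrder α] [PartialOrder β]
    (ρX : α → ℤ) (ρY : β → ℤ) (σ : α → β) : Prop :=
  Monotone σ ∧ RankIncreasing ρX ρY σ ∧ StronglySurjective ρX ρY σ ∧
    ∀ (x : α) (y : β), σ x ≤ y →
      (∑ᶠ (x' : α) (_ : x ≤ x' ∧ σ x' = y), (-1 : ℚ) ^ (ρY y - ρX x')) = 1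

/-- `q` is join-admissible: every `z` has a join with `q`. -/
def JoinAdmissible [Preorder α] (q : α) : Prop :=
  ∀ z : α, ∃ j : α, IsLeast {w : α | z ≤ w ∧ q ≤ w} j

/-- The rank of a poset: the maximal length of a chain `z_0 < z_1 < ⋯ < z_s`. -/
noncomputable def posetRank (α : Type*) [Preorder α] : ℕ :=
  sSup {n : ℕ | ∃ c : Fin (n + 1) → α, StrictMono c}

/-- A poset is graded if all of its maximal chains have the same length (cardinality). -/
def GradedPoset (α : Type*) [Preorder α] : Prop :=
  ∀ s t : Set α, IsMaxChain (· ≤ ·) s → IsMaxChain (· ≤ ·) t → s.ncard = t.ncard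


variable {α β : Type*}

/-- The order relation of the non-Hausdorff mapping cylinder of `σ : α → β` on `α ⊕ β`. -/
def cylLE [LE α] [LE β] (σ : α → β) : α ⊕ β → α ⊕ β → Prop
  | Sum.inl x, Sum.inl x' => x ≤ x'
  | Sum.inl x, Sum.inr y => σ x ≤ y
  | Sum.inr _, Sum.inl _ => False
  | Sum.inr y, Sum.inr y' => y ≤ y'

/-- The non-Hausdorff mapping cylinder of an order-preserving map `σ : α → β`, as a
partial order on `α ⊕ β`. -/
def cylPartialOrder [PartialOrder α] [PartialOrder β] (σ : α → β) (hσ : Monotone σ) :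
    PartialOrder (α ⊕ β) where
  le := cylLE σ
  lt a b := cylLE σ a b ∧ ¬ cylLE σ b a
  lt_iff_le_not_ge _ _ := Iff.rfl
  le_refl := by rintro (x | y) <;> simp [cylLE]
  le_trans := by
    rintro (x | y) (x' | y') (x'' | y'') hab hbc <;> simp only [cylLE] at * <;>
      first
        | exact hab.trans hbc
        | exact (hσ hab).trans hbc
  le_antisymm := by
    rintro (x | y) (x' | y') hab hba <;> simp only [cylLE] at *
    · exact congrArg Sum.inl (le_antisymm hab hba)
    · exact congrArg Sum.inr (le_antisymm hab hba)

/-- The rank function on the mapping cylinder: `ρX` on `X` and `ρY + 1` on `Y`. -/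
def cylRank (ρX : α → ℤ) (ρY : β → ℤ) : α ⊕ β → ℤ :=
  Sum.elim ρX fun y => ρY y + 1


lemma finsum_cond_inl {X Y : Type*} (p : X ⊕ Y → Prop) (f : X ⊕ Y → ℚ)
    (h : ∀ y, ¬ p (Sum.inr y)) :
    ∑ᶠ (z : X ⊕ Y) (_ : p z), f z = ∑ᶠ (x : X) (_ : p (Sum.inl x)), f (Sum.inl x) := by
  have hs : {z : X ⊕ Y | p z} = Sum.inl '' {x | p (Sum.inl x)} := by
    ext z
    cases z with
    | inl x => simp
    | inr y => simp [h y]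
  calc ∑ᶠ (z : X ⊕ Y) (_ : p z), f z = ∑ᶠ z ∈ {z : X ⊕ Y | p z}, f z := rfl
    _ = ∑ᶠ z ∈ Sum.inl '' {x | p (Sum.inl x)}, f z := by rw [hs]
    _ = ∑ᶠ x ∈ {x | p (Sum.inl x)}, f (Sum.inl x) :=
        finsum_mem_image Sum.inl_injective.injOn
    _ = _ := rfl

lemma finsum_cond_inr {X Y : Type*} (p : X ⊕ Y → Prop) (f : X ⊕ Y → ℚ)
    (h : ∀ x, ¬ p (Sum.inl x)) :
    ∑ᶠ (z : X ⊕ Y) (_ : p z), f z = ∑ᶠ (y : Y) (_ : p (Sum.inr y)), f (Sum.inr y) := by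
  have hs : {z : X ⊕ Y | p z} = Sum.inr '' {y | p (Sum.inr y)} := by
    ext z
    cases z with
    | inl x => simp [h x]
    | inr y => simp
  calc ∑ᶠ (z : X ⊕ Y) (_ : p z), f z = ∑ᶠ z ∈ {z : X ⊕ Y | p z}, f z := rfl
    _ = ∑ᶠ z ∈ Sum.inr '' {y | p (Sum.inr y)}, f z := by rw [hs]
    _ = ∑ᶠ y ∈ {y | p (Sum.inr y)}, f (Sum.inr y) :=
        finsum_mem_image Sum.inr_injective.injOn
    _ = _ := rfl

/-- Given strong formal subdivisions `σ, σ', φ₁, φ₂` between finite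
lower Eulerian posets with `σ' ∘ φ₁ = φ₂ ∘ σ`, the induced map
`φ = φ₁ ⊔ φ₂ : Cyl(σ) → Cyl(σ')` is a strong formal subdivision for the cylinder rank
functions. -/
theorem cyl_map_strongFormalSubdivision {X Y X' Y' : Type*}
    [PartialOrder X] [PartialOrder Y] [PartialOrder X'] [PartialOrder Y']
    [Finite X] [Finite Y] [Finite X'] [Finite Y']
    (ρX : X → ℤ) (ρY : Y → ℤ) (ρX' : X' → ℤ) (ρY' : Y' → ℤ)
    (hX : LowerEulerian ρX) (hY : LowerEulerian ρY)
    (hX' : LowerEulerian ρX') (hY' : LowerEulerian ρY')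
    (σ : X → Y) (hσ : StrongFormalSubdivision ρX ρY σ)
    (σ' : X' → Y') (hσ' : StrongFormalSubdivision ρX' ρY' σ')
    (φ₁ : X → X') (hφ₁ : StrongFormalSubdivision ρX ρX' φ₁)
    (φ₂ : Y → Y') (hφ₂ : StrongFormalSubdivision ρY ρY' φ₂)
    (hcomm : σ' ∘ φ₁ = φ₂ ∘ σ) :
    @StrongFormalSubdivision (X ⊕ Y) (X' ⊕ Y')
      (cylPartialOrder σ hσ.1) (cylPartialOrder σ' hσ'.1)
      (cylRank ρX ρY) (cylRank ρX' ρY') (Sum.map φ₁ φ₂) := by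
  letI : PartialOrder (X ⊕ Y) := cylPartialOrder σ hσ.1
  letI : PartialOrder (X' ⊕ Y') := cylPartialOrder σ' hσ'.1
  have hcomm' : ∀ x, σ' (φ₁ x) = φ₂ (σ x) := fun x => congrFun hcomm x
  obtain ⟨hσm, hσr, ⟨hσs, hσss⟩, hσe⟩ := hσ
  obtain ⟨hσ'm, hσ'r, ⟨hσ's, hσ'ss⟩, hσ'e⟩ := hσ'
  obtain ⟨h1m, h1r, ⟨h1s, h1ss⟩, h1e⟩ := hφ₁
  obtain ⟨h2m, h2r, ⟨h2s, h2ss⟩, h2e⟩ := hφ₂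
  refine ⟨?_, ?_, ⟨?_, ?_⟩, ?_⟩
  · -- Monotone
    rintro (x | y) (x' | y') h
    · exact h1m h
    · show σ' (φ₁ x) ≤ φ₂ y'
      rw [hcomm' x]
      exact h2m h
    · exact h.elim
    · exact h2m h
  · -- RankIncreasing
    rintro (x | y)
    · exact h1r x
    · simpa [cylRank] using h2r y
  · -- Surjective
    rintro (x' | y')
    · obtain ⟨x, hx⟩ := h1s x'
      exact ⟨Sum.inl x, by simp [hx]⟩
    · obtain ⟨y, hy⟩ := h2s y'
      exact ⟨Sum.inr y, by simp [hy]⟩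
  · -- strong surjectivity
    rintro (x | y) (x' | y') h
    · obtain ⟨x'', hle, hrk, heq⟩ := h1ss x x' h
      exact ⟨Sum.inl x'', hle, hrk, by simp [heq]⟩
    · -- σ' (φ₁ x) ≤ y', i.e. φ₂ (σ x) ≤ y'
      have h' : φ₂ (σ x) ≤ y' := by rw [← hcomm' x]; exact h
      obtain ⟨y'', hle, hrk, heq⟩ := h2ss (σ x) y' h'
      refine ⟨Sum.inr y'', hle, ?_, by simp [heq]⟩
      show ρY y'' + 1 = ρY' y' + 1
      rw [hrk]
    · exact h.elim
    · obtain ⟨y'', hle, hrk, heq⟩ := h2ss y y' h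
      refine ⟨Sum.inr y'', hle, ?_, by simp [heq]⟩
      show ρY y'' + 1 = ρY' y' + 1
      rw [hrk]
  · -- the alternating sum condition
    rintro (x | y) (x' | y') h
    · -- x ∈ X, target inl x' : only inl preimages
      refine (finsum_cond_inl _ _ ?_).trans ?_
      · rintro y ⟨hle, habs⟩
        exact absurd habs (by simp [Sum.map])
      · refine Eq.trans ?_ (h1e x x' h)
        apply finsum_congr; intro x''
        refine finsum_congr_Prop (propext (and_congr Iff.rfl (by simp [Sum.map]))) ?_
        intro _
        rfl
    · -- x ∈ X, target inr y' : only inr preimages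
      have h' : φ₂ (σ x) ≤ y' := by rw [← hcomm' x]; exact h
      refine (finsum_cond_inr _ _ ?_).trans ?_
      · rintro x'' ⟨hle, habs⟩
        exact absurd habs (by simp [Sum.map])
      · refine Eq.trans ?_ (h2e (σ x) y' h')
        apply finsum_congr; intro y''
        refine finsum_congr_Prop (propext (and_congr Iff.rfl (by simp [Sum.map]))) ?_
        intro _
        show (-1 : ℚ) ^ ((ρY' y' + 1) - (ρY y'' + 1)) = (-1 : ℚ) ^ (ρY' y' - ρY y'')
        exact congrArg ((-1 : ℚ) ^ ·) (by ring)
    · exact h.elim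
    · refine (finsum_cond_inr _ _ ?_).trans ?_
      · rintro x'' ⟨hle, habs⟩
        exact hle.elim
      · refine Eq.trans ?_ (h2e y y' h)
        apply finsum_congr; intro y''
        refine finsum_congr_Prop (propext (and_congr Iff.rfl (by simp [Sum.map]))) ?_
        intro _
        show (-1 : ℚ) ^ ((ρY' y' + 1) - (ρY y'' + 1)) = (-1 : ℚ) ^ (ρY' y' - ρY y'')
        exact congrArg ((-1 : ℚ) ^ ·) (by ring)

end SFSPaper
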